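/- Let n ≥ 1 and let M be an n×n complex matrix admitting a diagonalization M = U · diag(λ_1, …, λ_n) · U⁻¹ with U invertible, where the λ_i are pairwise distinct with |λ_i − λ_j| ≥ ε for all i ≠ j (ε > 0) and |λ_i| ≤ B for all i. Let μ_1, …, μ_n be complex numbers with |μ_i| ≤ 1 for all i, and let M' = U · diag(μ_1, …, μ_n) · U⁻¹. Then every entry of M' has absolute value at most n² · (1+B)^{n−1} · ε^{−(n−1)} · (n · max(1, ‖M‖))^{n−1}. -/

import Mathlib

/-- The max-norm of a matrix: the supremum of the absolute values of its entries. -/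
noncomputable def matMaxNorm {n : ℕ} (M : Matrix (Fin n) (Fin n) ℂ) : ℝ :=
  ⨆ i, ⨆ j, ‖M i j‖

lemma entry_le_matMaxNorm {n : ℕ} (M : Matrix (Fin n) (Fin n) ℂ) (a b : Fin n) :
    ‖M a b‖ ≤ matMaxNorm M := by
  have h1 : ‖M a b‖ ≤ ⨆ j, ‖M a j‖ :=
    le_ciSup (f := fun j => ‖M a j‖)
      (Set.Finite.bddAbove (Set.finite_range _)) b
  have h2 : (⨆ j, ‖M a j‖) ≤ matMaxNorm M :=
    le_ciSup (f := fun i => ⨆ j, ‖M i j‖)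
      (Set.Finite.bddAbove (Set.finite_range _)) a
  exact h1.trans h2

/-- Conjugation of a product of diagonal matrices, as a list product. -/
lemma conj_list_prod {n : ℕ} (U : Matrix (Fin n) (Fin n) ℂ) (hU : IsUnit U)
    {α : Type*} (g : α → Fin n → ℂ) (l : List α) :
    (l.map (fun j => U * Matrix.diagonal (g j) * U⁻¹)).prod =
      U * Matrix.diagonal (fun k => (l.map (fun j => g j k)).prod) * U⁻¹ := by
  have hdet : IsUnit U.det := (Matrix.isUnit_iff_isUnit_det U).mp hU
  have hUU : U * U⁻¹ = 1 := Matrix.mul_nonsing_inv U hdet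
  have hUU' : U⁻¹ * U = 1 := Matrix.nonsing_inv_mul U hdet
  induction l with
  | nil =>
      simp only [List.map_nil, List.prod_nil]
      rw [show (fun k : Fin n => (1 : ℂ)) = fun _ => 1 from rfl]
      rw [Matrix.diagonal_one, mul_one, hUU]
  | cons a l ih =>
      simp only [List.map_cons, List.prod_cons, ih]
      rw [show U * Matrix.diagonal (g a) * U⁻¹ *
            (U * Matrix.diagonal (fun k => (l.map (fun j => g j k)).prod) * U⁻¹) =
          U * Matrix.diagonal (g a) * (U⁻¹ * U) *
            Matrix.diagonal (fun k => (l.map (fun j => g j k)).prod) * U⁻¹ by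
        noncomm_ring]
      rw [hUU', mul_one, mul_assoc U, Matrix.diagonal_mul_diagonal]

/-- Entrywise bound for a product of matrices. -/
lemma list_prod_entry_bound {n : ℕ} (c : ℝ) (hc : 0 ≤ c)
    (l : List (Matrix (Fin n) (Fin n) ℂ))
    (h : ∀ A ∈ l, ∀ a b, ‖A a b‖ ≤ c) :
    ∀ a b, ‖l.prod a b‖ ≤ ((n : ℝ) * c) ^ l.length := by
  induction l with
  | nil =>
      intro a b
      simp only [List.prod_nil, List.length_nil, pow_zero]
      by_cases hab : a = b
      · subst hab; simp [Matrix.one_apply_eq]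
      · simp [Matrix.one_apply_ne hab]
  | cons A l ih =>
      intro a b
      have hA := h A List.mem_cons_self
      have ih' := ih (fun B hB => h B (List.mem_cons_of_mem A hB))
      simp only [List.prod_cons, List.length_cons]
      have : (A * l.prod) a b = ∑ k, A a k * l.prod k b := by
        simp [Matrix.mul_apply]
      rw [this]
      calc ‖∑ k, A a k * l.prod k b‖
          ≤ ∑ k, ‖A a k * l.prod k b‖ :=
            norm_sum_le _ _
        _ ≤ ∑ _k : Fin n, c * ((n : ℝ) * c) ^ l.length := by
            apply Finset.sum_le_sum
            intro k _
            rw [norm_mul]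
            exact mul_le_mul (hA a k) (ih' k b) (norm_nonneg _) hc
        _ = (n : ℝ) * (c * ((n : ℝ) * c) ^ l.length) := by
            simp [Finset.sum_const, Finset.card_univ, mul_comm]
        _ = ((n : ℝ) * c) ^ (l.length + 1) := by ring

/-- If `M = U * diag(λ) * U⁻¹` with pairwise `ε`-separated eigenvalues bounded by `B`,
and `M' = U * diag(μ) * U⁻¹` with `|μ i| ≤ 1`, then every entry of `M'` is bounded by
`n² * (1+B)^(n-1) * ε⁻¹^(n-1) * (n * max 1 ‖M‖)^(n-1)`. -/
theorem stmt_5 (n : ℕ) (hn : 1 ≤ n) (ε B : ℝ) (hε : 0 < ε)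
    (M U M' : Matrix (Fin n) (Fin n) ℂ) (hU : IsUnit U)
    (lam mu : Fin n → ℂ)
    (hM : M = U * Matrix.diagonal lam * U⁻¹)
    (hsep : ∀ i j, i ≠ j → ε ≤ ‖lam i - lam j‖)
    (hlamB : ∀ i, ‖lam i‖ ≤ B)
    (hmu : ∀ i, ‖mu i‖ ≤ 1)
    (hM' : M' = U * Matrix.diagonal mu * U⁻¹) :
    ∀ i j, ‖M' i j‖ ≤
      (n : ℝ) ^ 2 * (1 + B) ^ (n - 1) * (ε⁻¹) ^ (n - 1) *
        ((n : ℝ) * max 1 (matMaxNorm M)) ^ (n - 1) := by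
  classical
  have hdet : IsUnit U.det := (Matrix.isUnit_iff_isUnit_det U).mp hU
  have hUU : U * U⁻¹ = 1 := Matrix.mul_nonsing_inv U hdet
  -- basic positivity facts
  have i0 : Fin n := ⟨0, hn⟩
  have hB0 : 0 ≤ B := le_trans (norm_nonneg _) (hlamB i0)
  have hMn0 : 0 ≤ matMaxNorm M :=
    le_trans (norm_nonneg _) (entry_le_matMaxNorm M i0 i0)
  -- the erased sets
  set s : Fin n → Finset (Fin n) := fun i => Finset.univ.erase i with hs
  have hcard : ∀ i, (s i).card = n - 1 := by
    intro i
    simp [hs, Finset.card_erase_of_mem, Finset.card_univ]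
  -- denominators
  set d : Fin n → ℂ := fun i => ∏ j ∈ s i, (lam i - lam j) with hd
  have hd_lb : ∀ i, ε ^ (n - 1) ≤ ‖d i‖ := by
    intro i
    rw [hd]
    simp only
    rw [norm_prod]
    calc ε ^ (n - 1) = ∏ _j ∈ s i, ε := by rw [Finset.prod_const, hcard]
      _ ≤ ∏ j ∈ s i, ‖lam i - lam j‖ := by
          apply Finset.prod_le_prod (fun _ _ => le_of_lt hε)
          intro j hj
          exact hsep i j (Ne.symm (Finset.ne_of_mem_erase hj))
  have hd_ne : ∀ i, d i ≠ 0 := by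
    intro i h0
    have := hd_lb i
    rw [h0, norm_zero] at this
    exact absurd this (not_le.mpr (pow_pos hε _))
  -- numerator polynomials (evaluated diagonally)
  set g : Fin n → Fin n → ℂ := fun i k => ∏ j ∈ s i, (lam k - lam j) with hg
  -- Lagrange interpolation identity on the diagonal
  have interp : ∀ k, mu k = ∑ i, mu i * (d i)⁻¹ * g i k := by
    intro k
    rw [Finset.sum_eq_single k]
    · have hgd : g k k = d k := rfl
      rw [hgd, mul_assoc, inv_mul_cancel₀ (hd_ne k), mul_one]
    · intro i _ hik
      have hk : k ∈ s i := Finset.mem_erase.mpr ⟨Ne.symm hik, Finset.mem_univ k⟩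
      have : g i k = 0 := Finset.prod_eq_zero hk (by simp)
      rw [this, mul_zero]
    · intro h; exact absurd (Finset.mem_univ k) h
  -- diagonal matrix identity
  have diag_id : Matrix.diagonal mu =
      ∑ i, (mu i * (d i)⁻¹) • Matrix.diagonal (g i) := by
    ext k k'
    rw [Matrix.sum_apply]
    by_cases hkk : k = k'
    · subst hkk
      simp only [Matrix.diagonal_apply_eq, Matrix.smul_apply, smul_eq_mul]
      exact interp k
    · simp [Matrix.diagonal_apply_ne _ hkk]
  -- conjugated identity
  have hM'sum : M' = ∑ i, (mu i * (d i)⁻¹) • (U * Matrix.diagonal (g i) * U⁻¹) := by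
    rw [hM', diag_id, Finset.mul_sum, Finset.sum_mul]
    congr 1
    ext i
    rw [Matrix.mul_smul, Matrix.smul_mul]
  -- each conjugated diagonal as a product of (M - lam j • 1)
  have hconj : ∀ i, U * Matrix.diagonal (g i) * U⁻¹ =
      ((s i).toList.map (fun j => M - lam j • 1)).prod := by
    intro i
    have hfac : ∀ j, M - lam j • (1 : Matrix (Fin n) (Fin n) ℂ) =
        U * Matrix.diagonal (fun k => lam k - lam j) * U⁻¹ := by
      intro j
      have hdiag : Matrix.diagonal (fun k => lam k - lam j) =
          Matrix.diagonal lam - lam j • (1 : Matrix (Fin n) (Fin n) ℂ) := by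
        ext a b
        by_cases hab : a = b <;>
          simp [hab, Matrix.diagonal_apply, Matrix.one_apply]
      rw [hdiag, Matrix.mul_sub, Matrix.sub_mul, ← hM]
      congr 1
      rw [Matrix.mul_smul, Matrix.smul_mul, mul_one, hUU]
    have : ((s i).toList.map (fun j => M - lam j • 1)).prod =
        ((s i).toList.map (fun j => U * Matrix.diagonal (fun k => lam k - lam j) * U⁻¹)).prod := by
      congr 1
      exact List.map_congr_left (fun j _ => hfac j)
    rw [this, conj_list_prod U hU (fun j k => lam k - lam j)]
    rw [show (fun k => (List.map (fun j => lam k - lam j) (s i).toList).prod) = g i from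
      funext fun k => Finset.prod_map_toList (s i) (fun j => lam k - lam j)]
  -- bound on entry of M - lam j • 1
  set c : ℝ := matMaxNorm M + B with hc
  have hc0 : 0 ≤ c := add_nonneg hMn0 hB0
  have hfacbound : ∀ j, ∀ a b : Fin n,
      ‖(M - lam j • (1 : Matrix (Fin n) (Fin n) ℂ)) a b‖ ≤ c := by
    intro j a b
    have : (M - lam j • (1 : Matrix (Fin n) (Fin n) ℂ)) a b =
        M a b - lam j * (1 : Matrix (Fin n) (Fin n) ℂ) a b := by
      simp [Matrix.sub_apply, Matrix.smul_apply]
    rw [this]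
    calc ‖M a b - lam j * (1 : Matrix (Fin n) (Fin n) ℂ) a b‖
        ≤ ‖M a b‖ + ‖lam j * (1 : Matrix (Fin n) (Fin n) ℂ) a b‖ :=
          norm_sub_le _ _
      _ ≤ matMaxNorm M + B := by
          apply add_le_add (entry_le_matMaxNorm M a b)
          rw [norm_mul]
          have h1 : ‖(1 : Matrix (Fin n) (Fin n) ℂ) a b‖ ≤ 1 := by
            by_cases hab : a = b
            · subst hab; simp [Matrix.one_apply_eq]
            · simp [Matrix.one_apply_ne hab]
          calc ‖lam j‖ * ‖(1 : Matrix (Fin n) (Fin n) ℂ) a b‖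
              ≤ B * 1 := mul_le_mul (hlamB j) h1 (norm_nonneg _)
                (le_trans (norm_nonneg _) (hlamB j))
            _ = B := mul_one B
  -- entry bound on each product
  have hlen : ∀ i, ((s i).toList.map
      (fun j => M - lam j • (1 : Matrix (Fin n) (Fin n) ℂ))).length = n - 1 := by
    intro i
    rw [List.length_map, Finset.length_toList, hcard]
  have hprodbound : ∀ i, ∀ a b : Fin n,
      ‖(U * Matrix.diagonal (g i) * U⁻¹) a b‖ ≤ ((n : ℝ) * c) ^ (n - 1) := by
    intro i a b
    rw [hconj i]
    have := list_prod_entry_bound c hc0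
      ((s i).toList.map (fun j => M - lam j • 1))
      (by
        intro A hA a' b'
        rcases List.mem_map.mp hA with ⟨j, _, rfl⟩
        exact hfacbound j a' b') a b
    rwa [hlen i] at this
  -- coefficient bound
  have hcoef : ∀ i, ‖mu i * (d i)⁻¹‖ ≤ (ε⁻¹) ^ (n - 1) := by
    intro i
    rw [norm_mul, norm_inv]
    have h1 : ‖d i‖ ≠ 0 := by
      intro h; exact hd_ne i (by rwa [norm_eq_zero] at h)
    calc ‖mu i‖ * (‖d i‖)⁻¹
        ≤ 1 * (ε ^ (n - 1))⁻¹ := by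
          apply mul_le_mul (hmu i)
          · exact inv_anti₀ (pow_pos hε _) (hd_lb i)
          · positivity
          · norm_num
      _ = (ε⁻¹) ^ (n - 1) := by rw [one_mul, inv_pow]
  -- put everything together
  intro a b
  rw [hM'sum, Matrix.sum_apply]
  calc ‖∑ i, ((mu i * (d i)⁻¹) • (U * Matrix.diagonal (g i) * U⁻¹)) a b‖
      ≤ ∑ i, ‖((mu i * (d i)⁻¹) • (U * Matrix.diagonal (g i) * U⁻¹)) a b‖ :=
        norm_sum_le _ _
    _ ≤ ∑ _i : Fin n, (ε⁻¹) ^ (n - 1) * ((n : ℝ) * c) ^ (n - 1) := by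
        apply Finset.sum_le_sum
        intro i _
        have : ((mu i * (d i)⁻¹) • (U * Matrix.diagonal (g i) * U⁻¹)) a b =
            (mu i * (d i)⁻¹) * (U * Matrix.diagonal (g i) * U⁻¹) a b := by
          simp [Matrix.smul_apply]
        rw [this, norm_mul]
        exact mul_le_mul (hcoef i) (hprodbound i a b) (norm_nonneg _) (by positivity)
    _ = (n : ℝ) * ((ε⁻¹) ^ (n - 1) * ((n : ℝ) * c) ^ (n - 1)) := by
        simp [Finset.sum_const, Finset.card_univ]
    _ ≤ (n : ℝ) ^ 2 * (1 + B) ^ (n - 1) * (ε⁻¹) ^ (n - 1) *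
        ((n : ℝ) * max 1 (matMaxNorm M)) ^ (n - 1) := by
        have hn1 : (1 : ℝ) ≤ (n : ℝ) := by exact_mod_cast hn
        have hnn : (n : ℝ) ≤ (n : ℝ) ^ 2 := by nlinarith
        have hcc : (n : ℝ) * c ≤ (1 + B) * ((n : ℝ) * max 1 (matMaxNorm M)) := by
          have h1 : matMaxNorm M ≤ max 1 (matMaxNorm M) := le_max_right _ _
          have h2 : B ≤ B * max 1 (matMaxNorm M) := by
            nlinarith [le_max_left (1 : ℝ) (matMaxNorm M)]
          have : c ≤ (1 + B) * max 1 (matMaxNorm M) := by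
            rw [hc]; nlinarith
          nlinarith [le_max_left (1 : ℝ) (matMaxNorm M)]
        have hpow : ((n : ℝ) * c) ^ (n - 1) ≤
            ((1 + B) * ((n : ℝ) * max 1 (matMaxNorm M))) ^ (n - 1) :=
          pow_le_pow_left₀ (by positivity) hcc _
        have hε1 : (0 : ℝ) ≤ (ε⁻¹) ^ (n - 1) := by positivity
        calc (n : ℝ) * ((ε⁻¹) ^ (n - 1) * ((n : ℝ) * c) ^ (n - 1))
            ≤ (n : ℝ) ^ 2 * ((ε⁻¹) ^ (n - 1) *
              ((1 + B) * ((n : ℝ) * max 1 (matMaxNorm M))) ^ (n - 1)) := by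
              apply mul_le_mul hnn _ (by positivity) (by positivity)
              exact mul_le_mul_of_nonneg_left hpow hε1
          _ = (n : ℝ) ^ 2 * (1 + B) ^ (n - 1) * (ε⁻¹) ^ (n - 1) *
              ((n : ℝ) * max 1 (matMaxNorm M)) ^ (n - 1) := by
              rw [mul_pow]; ring
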